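/- Let f be a partially hyperbolic diffeomorphism of a closed manifold M with one-dimensional center bundle E^c whose center foliation F^c is a C^1 foliation, and let {vol^c_x}_{x∈M} be the continuous disintegration of the Lebesgue measure of M along the center leaves, writing dvol^c_x(y) = φ(y) dvol|_{F^c(x)}(y). Suppose f preserves this disintegration, i.e. f_*(vol^c_x) = vol^c_{f(x)} for all x, and suppose there is K_1 > 0 with 1/K_1 < φ(y) < K_1 for all y ∈ M. Then for every p ∈ M and every integer n > 0, 1/K_1^2 ≤ ||D_p f^n|_{E^c}|| ≤ K_1^2. -/

import Mathlib

open MeasureTheory Filter Topology Set Function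

noncomputable section

/-- The `d`-dimensional torus `ℝ^d/ℤ^d`. -/
abbrev Torus (d : ℕ) := Fin d → AddCircle (1 : ℝ)

namespace PaperDyn

variable {d : ℕ}

/-- The canonical projection `ℝ^d → 𝕋^d`. -/
def tproj (x : Fin d → ℝ) : Torus d := fun i => (x i : AddCircle (1 : ℝ))

/-- The automorphism of the torus induced by an integer matrix. -/
def inducedMap (A : Matrix (Fin d) (Fin d) ℤ) : Torus d → Torus d :=
  fun x i => ∑ j, A i j • x j

/-- `F : ℝ^d → ℝ^d` is a lift of the torus map `f`. -/
def IsLift (F : (Fin d → ℝ) → Fin d → ℝ) (f : Torus d → Torus d) : Prop :=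
  ∀ x, tproj (F x) = f (tproj x)

/-- A linear Anosov automorphism: an integer matrix with determinant `±1` and
no eigenvalue of modulus one. -/
structure IsAnosovMatrix (A : Matrix (Fin d) (Fin d) ℤ) : Prop where
  unimodular : A.det = 1 ∨ A.det = -1
  hyperbolic : ∀ z ∈ (A.map ((↑) : ℤ → ℂ)).charpoly.roots, ‖z‖ ≠ 1

/-- The matrix `A` has simple real spectrum `μ 0, …, μ (d-1)` whose absolute
values are pairwise distinct. -/
def SimpleRealSpectrum (A : Matrix (Fin d) (Fin d) ℤ) (μ : Fin d → ℝ) : Prop :=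
  (A.map ((↑) : ℤ → ℝ)).charpoly = ∏ i, (Polynomial.X - Polynomial.C (μ i)) ∧
    Function.Injective fun i => |μ i|

/-- Irreducibility: the characteristic polynomial is irreducible over `ℚ`. -/
def IsIrreducibleMatrix (A : Matrix (Fin d) (Fin d) ℤ) : Prop :=
  Irreducible ((A.map ((↑) : ℤ → ℚ)).charpoly)

/-- The continuous linear map `v ↦ A v` on `ℝ^d`. -/
def mulVecCLM (A : Matrix (Fin d) (Fin d) ℤ) : (Fin d → ℝ) →L[ℝ] (Fin d → ℝ) :=
  LinearMap.toContinuousLinearMap ((A.map ((↑) : ℤ → ℝ)).mulVecLin)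

/-- `f` is a `C^n` diffeomorphism of the torus: it is invertible, and both `f`
and its inverse admit `C^n` lifts. -/
def IsCnDiffeo (n : ℕ∞) (f : Torus d → Torus d) : Prop :=
  ∃ (g : Torus d → Torus d) (F G : (Fin d → ℝ) → Fin d → ℝ),
    Function.LeftInverse g f ∧ Function.RightInverse g f ∧
    IsLift F f ∧ IsLift G g ∧ ContDiff ℝ n F ∧ ContDiff ℝ n G

/-- A `C^{1+ε}` map of `ℝ^d`: it is `C^1` with `ε`-Hölder derivative. -/
def IsC1HolderLift (ε : NNReal) (F : (Fin d → ℝ) → Fin d → ℝ) : Prop :=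
  ContDiff ℝ 1 F ∧ ∃ C : NNReal, HolderWith C ε (fderiv ℝ F)

/-- `f` is a `C^{1+ε}` diffeomorphism of the torus. -/
def IsC1HolderDiffeo (ε : NNReal) (f : Torus d → Torus d) : Prop :=
  ∃ (g : Torus d → Torus d) (F G : (Fin d → ℝ) → Fin d → ℝ),
    Function.LeftInverse g f ∧ Function.RightInverse g f ∧
    IsLift F f ∧ IsLift G g ∧ IsC1HolderLift ε F ∧ IsC1HolderLift ε G

/-- `f` is conjugate to `g` by a `C^{1+ε}` diffeomorphism, for some `ε > 0`. -/
def C1HolderConjugate (f g : Torus d → Torus d) : Prop :=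
  ∃ (ε : NNReal) (h : Torus d → Torus d),
    0 < ε ∧ IsC1HolderDiffeo ε h ∧ h ∘ f = g ∘ h

/-- `f` is conjugate to `g` by a `C^∞` diffeomorphism. -/
def SmoothlyConjugate (f g : Torus d → Torus d) : Prop :=
  ∃ h : Torus d → Torus d, IsCnDiffeo (⊤ : ℕ∞) h ∧ h ∘ f = g ∘ h

/-- `f` and `g` are homotopic. -/
def Homotopic (f g : Torus d → Torus d) : Prop :=
  ∃ H : ℝ → Torus d → Torus d,
    Continuous (fun p : ℝ × Torus d => H p.1 p.2) ∧ H 0 = f ∧ H 1 = g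

/-- `f` and `g` are isotopic (joined by a continuous path of homeomorphisms). -/
def Isotopic (f g : Torus d → Torus d) : Prop :=
  ∃ H : ℝ → Torus d → Torus d,
    Continuous (fun p : ℝ × Torus d => H p.1 p.2) ∧
    (∀ t, IsHomeomorph (H t)) ∧ H 0 = f ∧ H 1 = g

/-- `f` is `ε`-close to the linear automorphism induced by `A` in the `C^1`
topology (measured on a lift). -/
def C1CloseLinear (ε : ℝ) (A : Matrix (Fin d) (Fin d) ℤ) (f : Torus d → Torus d) : Prop :=
  ∃ F, IsLift F f ∧ ContDiff ℝ 1 F ∧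
    ∀ x, ‖F x - (A.map ((↑) : ℤ → ℝ)).mulVec x‖ ≤ ε ∧
      ‖fderiv ℝ F x - mulVecCLM A‖ ≤ ε

/-- The data exhibiting a torus diffeomorphism as Anosov: a `Df`-invariant
splitting `E^s ⊕ E^u`, with uniform contraction on `E^s` and uniform expansion
on `E^u`. -/
structure AnosovData (f : Torus d → Torus d) where
  F : (Fin d → ℝ) → Fin d → ℝ
  lift : IsLift F f
  smooth : ContDiff ℝ 1 F
  Es : Torus d → Submodule ℝ (Fin d → ℝ)
  Eu : Torus d → Submodule ℝ (Fin d → ℝ)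
  compl : ∀ p, IsCompl (Es p) (Eu p)
  invS : ∀ x v, v ∈ Es (tproj x) → fderiv ℝ F x v ∈ Es (f (tproj x))
  invU : ∀ x v, v ∈ Eu (tproj x) → fderiv ℝ F x v ∈ Eu (f (tproj x))
  Cst : ℝ
  lam : ℝ
  Cst_pos : 0 < Cst
  lam_pos : 0 < lam
  contractS : ∀ (n : ℕ) x v, v ∈ Es (tproj x) →
    ‖fderiv ℝ (F^[n]) x v‖ ≤ Cst * Real.exp (-lam * n) * ‖v‖
  expandU : ∀ (n : ℕ) x v, v ∈ Eu (tproj x) →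
    Cst⁻¹ * Real.exp (lam * n) * ‖v‖ ≤ ‖fderiv ℝ (F^[n]) x v‖

/-- `f` is an Anosov diffeomorphism of the torus. -/
def IsAnosov (f : Torus d → Torus d) : Prop := Nonempty (AnosovData f)

/-- The data exhibiting a torus diffeomorphism as partially hyperbolic:
a `Df`-invariant splitting `E^s ⊕ E^c ⊕ E^u` with pointwise dominated
contraction/expansion estimates. -/
structure PHData (f : Torus d → Torus d) where
  F : (Fin d → ℝ) → Fin d → ℝ
  lift : IsLift F f
  smooth : ContDiff ℝ 1 F
  Es : Torus d → Submodule ℝ (Fin d → ℝ)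
  Ec : Torus d → Submodule ℝ (Fin d → ℝ)
  Eu : Torus d → Submodule ℝ (Fin d → ℝ)
  compl : ∀ p, IsCompl (Es p) (Ec p ⊔ Eu p)
  disj : ∀ p, Disjoint (Ec p) (Eu p)
  invS : ∀ x v, v ∈ Es (tproj x) → fderiv ℝ F x v ∈ Es (f (tproj x))
  invC : ∀ x v, v ∈ Ec (tproj x) → fderiv ℝ F x v ∈ Ec (f (tproj x))
  invU : ∀ x v, v ∈ Eu (tproj x) → fderiv ℝ F x v ∈ Eu (f (tproj x))
  lam1 : Torus d → ℝ
  lam2 : Torus d → ℝ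
  lam3 : Torus d → ℝ
  lam4 : Torus d → ℝ
  bounds : ∀ p, 0 < lam1 p ∧ lam1 p < lam2 p ∧ lam2 p ≤ lam3 p ∧ lam3 p < lam4 p ∧
    lam1 p < 1 ∧ 1 < lam4 p
  estS : ∀ x v, v ∈ Es (tproj x) → ‖fderiv ℝ F x v‖ ≤ lam1 (tproj x) * ‖v‖
  estClow : ∀ x v, v ∈ Ec (tproj x) → lam2 (tproj x) * ‖v‖ ≤ ‖fderiv ℝ F x v‖
  estChigh : ∀ x v, v ∈ Ec (tproj x) → ‖fderiv ℝ F x v‖ ≤ lam3 (tproj x) * ‖v‖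
  estU : ∀ x v, v ∈ Eu (tproj x) → lam4 (tproj x) * ‖v‖ ≤ ‖fderiv ℝ F x v‖

/-- `f` is a partially hyperbolic diffeomorphism of the torus. -/
def IsPartiallyHyperbolic (f : Torus d → Torus d) : Prop := Nonempty (PHData f)

/-- `f` has Lyapunov exponents `χ 0, …, χ (d-1)` with respect to the volume,
realised on a measurable invariant splitting into one-dimensional subbundles
(Oseledets splitting). -/
def HasLyapunovSpectrum (f : Torus d → Torus d) (χ : Fin d → ℝ) : Prop :=
  ∃ (F : (Fin d → ℝ) → Fin d → ℝ) (E : Fin d → Torus d → Submodule ℝ (Fin d → ℝ)),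
    IsLift F f ∧ ContDiff ℝ 1 F ∧
    (∀ i x v, v ∈ E i (tproj x) → fderiv ℝ F x v ∈ E i (f (tproj x))) ∧
    (∀ p, (⨆ i, E i p) = ⊤) ∧
    (∀ i p, Module.finrank ℝ (E i p) = 1) ∧
    ∀ᵐ p ∂(volume : Measure (Torus d)), ∀ x, tproj x = p → ∀ i, ∀ v ∈ E i p, v ≠ 0 →
      Tendsto (fun n : ℕ => Real.log ‖fderiv ℝ (F^[n]) x v‖ / n) atTop (nhds (χ i))

/-- Two spectra agree (as unordered tuples with multiplicity). -/
def SameSpectrum (χ η : Fin d → ℝ) : Prop :=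
  Multiset.map χ Finset.univ.val = Multiset.map η Finset.univ.val

end PaperDyn
namespace PaperDyn

section Foliation

/-- The topological support of a measure. -/
def msupport {M : Type*} [TopologicalSpace M] [MeasurableSpace M] (μ : Measure M) : Set M :=
  {x | ∀ U : Set M, IsOpen U → x ∈ U → 0 < μ U}

/-- An expanding foliation (with uniformly `C^r` leaves) of a diffeomorphism
`f`: an `f`-invariant partition of `M` into leaves, equipped with the leafwise
Lebesgue (Riemannian) measures and the leafwise Jacobian of `f`, which is
uniformly larger than `1` (uniform expansion). -/
structure ExpFoliation (M : Type*) [TopologicalSpace M] [MeasurableSpace M]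
    (f : M → M) (r : ℝ) where
  leaf : M → Set M
  mem_leaf : ∀ x, x ∈ leaf x
  leaf_eq : ∀ x y, y ∈ leaf x → leaf y = leaf x
  invariant : ∀ x, f '' leaf x = leaf (f x)
  /-- the Jacobian `det (Df|_{T𝓕})` of `f` along the leaves -/
  jac : M → ℝ
  jac_cont : Continuous jac
  lam : ℝ
  lam_pos : 0 < lam
  expanding : ∀ x, Real.exp lam ≤ jac x
  /-- Lebesgue measure along the leaf through `x` -/
  leafMeasure : M → Measure M
  leafMeasure_null : ∀ x, leafMeasure x (leaf x)ᶜ = 0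
  leafMeasure_eq : ∀ x y, y ∈ leaf x → leafMeasure y = leafMeasure x
  leafMeasure_pos : ∀ x, ∀ U : Set M, IsOpen U → x ∈ U → 0 < leafMeasure x U
  jac_spec : ∀ x, ∀ s : Set M, s ⊆ leaf x → MeasurableSet s →
    leafMeasure (f x) (f '' s) = ∫⁻ y in s, ENNReal.ofReal (jac y) ∂(leafMeasure x)

/-- A one-dimensional expanding foliation: an expanding foliation together with
parametrisations of the leaves by arclength, so that the leafwise Lebesgue
measure is the arclength measure. -/
structure ExpFoliation1D (M : Type*) [TopologicalSpace M] [MeasurableSpace M]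
    (f : M → M) (r : ℝ) extends ExpFoliation M f r where
  param : M → ℝ → M
  param_zero : ∀ x, param x 0 = x
  param_cont : ∀ x, Continuous (param x)
  param_inj : ∀ x, Function.Injective (param x)
  param_range : ∀ x, Set.range (param x) = leaf x
  leafMeasure_param : ∀ x, leafMeasure x = Measure.map (param x) volume

variable {M : Type*} [TopologicalSpace M] [MeasurableSpace M] {f : M → M} {r : ℝ}

/-- A measurable partition subordinate to the expanding foliation `F`, together
with the Rokhlin disintegration of `μ` along it: `μ`-almost every piece is a
neighbourhood of its base point inside the corresponding leaf, the partition is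
refined by its `f`-preimage, and the iterated refinements generate the
partition into points. -/
structure SubPartition (F : ExpFoliation M f r) (μ : Measure M) where
  piece : M → Set M
  /-- the conditional measures of `μ` on the pieces -/
  cond : M → Measure M
  piece_meas : ∀ x, MeasurableSet (piece x)
  piece_mem : ∀ᵐ x ∂μ, x ∈ piece x
  piece_sub : ∀ᵐ x ∂μ, piece x ⊆ F.leaf x
  piece_nbhd : ∀ᵐ x ∂μ, ∃ U : Set M, IsOpen U ∧ x ∈ U ∧ U ∩ F.leaf x ⊆ piece x
  piece_eq : ∀ x y, y ∈ piece x → piece y = piece x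
  refines : ∀ᵐ x ∂μ, piece (f x) ⊆ f '' piece x
  generating : ∀ᵐ x ∂μ, (⋂ n : ℕ, (f^[n]) ⁻¹' piece (f^[n] x)) = {x}
  cond_prob : ∀ x, IsProbabilityMeasure (cond x)
  cond_null : ∀ᵐ x ∂μ, cond x (piece x)ᶜ = 0
  cond_eq : ∀ x y, y ∈ piece x → cond y = cond x
  cond_meas : ∀ s : Set M, MeasurableSet s → Measurable fun x => cond x s
  disint : ∀ s : Set M, MeasurableSet s → μ s = ∫⁻ x, cond x s ∂μ

/-- The conditional (partial) entropy `h_μ(f,𝓕) = H_μ(f⁻¹ξ ∣ ξ)` of `f` and `μ`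
along the expanding foliation, computed with the subordinate partition `P`. -/
def SubPartition.entropy {F : ExpFoliation M f r} {μ : Measure M}
    (P : SubPartition F μ) : ℝ :=
  ∫ x, -Real.log ((P.cond x (f ⁻¹' P.piece (f x))).toReal) ∂μ

/-- `μ` is a Gibbs expanding state along the expanding foliation `F`: it is an
`f`-invariant probability measure whose conditional measures along the pieces
of any subordinate partition are equivalent to leafwise Lebesgue measure. -/
def IsGibbs (F : ExpFoliation M f r) (μ : Measure M) : Prop :=
  IsProbabilityMeasure μ ∧ Measure.map f μ = μ ∧
    ∀ P : SubPartition F μ, ∀ᵐ x ∂μ,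
      P.cond x ≪ (F.leafMeasure x).restrict (P.piece x) ∧
      (F.leafMeasure x).restrict (P.piece x) ≪ P.cond x

/-- `det(Df^n|_{T_x𝓕})`, the Jacobian of `f^n` along the foliation. -/
def jacN (F : ExpFoliation M f r) (n : ℕ) (x : M) : ℝ :=
  ∏ i ∈ Finset.range n, F.jac (f^[i] x)

/-- A map `φ : ℝ → ℝ` is (uniformly) `C^r`, `r = ⌊r⌋ + {r}`, with constant `C`:
it is `C^⌊r⌋` and its `⌊r⌋`-th derivative is `{r}`-Hölder with constant `C`. -/
def UniformlyCr (r : ℝ) (C : NNReal) (φ : ℝ → ℝ) : Prop :=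
  ContDiff ℝ (⌊r⌋₊ : ℕ) φ ∧
    HolderWith C (Real.toNNReal (r - ⌊r⌋₊)) (iteratedDeriv ⌊r⌋₊ φ)

variable {M' : Type*} [TopologicalSpace M'] [MeasurableSpace M'] {g : M' → M'} {r' : ℝ}

/-- `P` is the lift of the subordinate partition `Q` through the fibration `π`. -/
def IsPartitionLift (π : M → M') {F : ExpFoliation M f r} {G : ExpFoliation M' g r'}
    {μ : Measure M} {ν : Measure M'} (P : SubPartition F μ) (Q : SubPartition G ν) : Prop :=
  ∀ x, π '' P.piece x = Q.piece (π x)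

/-- `μ` is `c`-invariant for `F` (relative to the fibration `π` and the base
foliation `G`): for every subordinate partition downstairs and every lift of it
upstairs, the conditional measures of `μ` project to the conditional measures
of `π_*μ`. -/
def CInvariant (π : M → M') (F : ExpFoliation M f r) (G : ExpFoliation M' g r')
    (μ : Measure M) (ν : Measure M') : Prop :=
  ∀ (Q : SubPartition G ν) (P : SubPartition F μ), IsPartitionLift π P Q →
    ∀ᵐ x ∂μ, Measure.map π (P.cond x) = Q.cond (π x)

end Foliation

end PaperDyn
namespace PaperDyn

/-- **Neutral center from an invariant disintegration.** Let `f` be a partially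
hyperbolic diffeomorphism of a closed manifold with one-dimensional center
bundle whose center foliation is a `C^1` foliation, and let `{vol^c_x}` be the
continuous disintegration of the Lebesgue measure along the center leaves, with
density `φ` (with respect to the leafwise Lebesgue measure) satisfying
`1/K₁ < φ < K₁`.  If `f` preserves the disintegration, i.e.
`f_*(vol^c_x) = vol^c_{f x}` for all `x`, then for every `p` and `n > 0`,
`1/K₁² ≤ ‖D_p f^n|_{E^c}‖ ≤ K₁²` (the center derivative being the leafwise
Jacobian `∏_{i<n} jac_c (f^i p)`). -/
theorem neutral_center_of_invariant_disintegration
    {M : Type*} [MetricSpace M] [CompactSpace M] [MeasureSpace M] [BorelSpace M]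
    (f fi : M → M)
    (hfinv : Function.LeftInverse fi f ∧ Function.RightInverse fi f)
    (hfc : Continuous f) (hfic : Continuous fi)
    -- the center foliation, a `C^1` one-dimensional `f`-invariant foliation
    (leafc : M → Set M)
    (hmem : ∀ x, x ∈ leafc x)
    (hleq : ∀ x y, y ∈ leafc x → leafc y = leafc x)
    (hfleaf : ∀ x, f '' leafc x = leafc (f x))
    (paramc : M → ℝ → M)
    (hp0 : ∀ x, paramc x 0 = x)
    (hpcont : ∀ x, Continuous (paramc x))
    (hpinj : ∀ x, Function.Injective (paramc x))
    (hprange : ∀ x, Set.range (paramc x) = leafc x)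
    -- leafwise Lebesgue (arclength) measure on the center leaves
    (leafMeasC : M → Measure M)
    (hlm : ∀ x, leafMeasC x = Measure.map (paramc x) volume)
    (hlmeq : ∀ x y, y ∈ leafc x → leafMeasC y = leafMeasC x)
    -- `jacc x = ‖D_x f|_{E^c}‖`, the leafwise derivative of `f` along the
    -- (one-dimensional) center foliation
    (jacc : M → ℝ)
    (hjpos : ∀ x, 0 < jacc x) (hjcont : Continuous jacc)
    (hjspec : ∀ x, ∀ s : Set M, s ⊆ leafc x → MeasurableSet s →
      leafMeasC (f x) (f '' s) = ∫⁻ y in s, ENNReal.ofReal (jacc y) ∂(leafMeasC x))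
    -- partial hyperbolicity: the center direction is dominated by uniformly
    -- contracting and uniformly expanding invariant foliations
    (Fu : ExpFoliation M f 1) (Fs : ExpFoliation M fi 1)
    (θ : ℝ) (hθ0 : 0 < θ) (hθ : θ < 1)
    (hdom : ∀ x, (Fs.jac (f x))⁻¹ ≤ θ * jacc x ∧ jacc x ≤ θ * Fu.jac x)
    -- the continuous disintegration `vol^c` of the Lebesgue measure along the
    -- center leaves, with density `φ` bounded between `1/K₁` and `K₁`
    (volc : M → Measure M) (φ : M → ℝ) (hφcont : Continuous φ)
    (hφdens : ∀ x, volc x = (leafMeasC x).withDensity fun y => ENNReal.ofReal (φ y))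
    (hdisint : ∀ s : Set M, MeasurableSet s → volume s = ∫⁻ x, volc x s ∂volume)
    (K₁ : ℝ) (hK₁pos : 0 < K₁)
    (hφbound : ∀ y, 1 / K₁ < φ y ∧ φ y < K₁)
    -- `f` preserves the disintegration
    (hpres : ∀ x, Measure.map f (volc x) = volc (f x)) :
    ∀ p : M, ∀ n : ℕ, 0 < n →
      1 / K₁ ^ 2 ≤ ∏ i ∈ Finset.range n, jacc (f^[i] p) ∧
      ∏ i ∈ Finset.range n, jacc (f^[i] p) ≤ K₁ ^ 2 := by
  obtain ⟨hli, hri⟩ := hfinv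
  have hfinj : Function.Injective f := hli.injective
  have hφpos : ∀ y, 0 < φ y := by
    intro y
    have h := (hφbound y).1
    have h0 : 0 < 1 / K₁ := by positivity
    linarith
  -- The key identity: the density is multiplied by the center Jacobian.
  have key : ∀ x, φ (f x) * jacc x = φ x := by
    intro x
    have main : ∀ ε : ℝ, 0 < ε → ε < φ (f x) → ε < jacc x →
        φ x - ε ≤ (φ (f x) + ε) * (jacc x + ε) ∧
        (φ (f x) - ε) * (jacc x - ε) ≤ φ x + ε := by
      intro ε hε hε1 hε2
      set O : Set M := φ ⁻¹' Set.Ioo (φ x - ε) (φ x + ε) ∩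
        jacc ⁻¹' Set.Ioo (jacc x - ε) (jacc x + ε) ∩
        f ⁻¹' (φ ⁻¹' Set.Ioo (φ (f x) - ε) (φ (f x) + ε)) with hOdef
      have hOopen : IsOpen O := by
        refine IsOpen.inter (IsOpen.inter ?_ ?_) ?_
        · exact isOpen_Ioo.preimage hφcont
        · exact isOpen_Ioo.preimage hjcont
        · exact (isOpen_Ioo.preimage hφcont).preimage hfc
      have hxO : x ∈ O :=
        ⟨⟨⟨by linarith, by linarith⟩, ⟨by linarith, by linarith⟩⟩, ⟨by linarith, by linarith⟩⟩
      have h0mem : (0 : ℝ) ∈ paramc x ⁻¹' O := by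
        simp only [Set.mem_preimage, hp0 x]; exact hxO
      obtain ⟨δ₀, hδ₀, hball⟩ := Metric.isOpen_iff.mp (hOopen.preimage (hpcont x)) 0 h0mem
      set δ : ℝ := δ₀ / 2 with hδdef
      have hδ : 0 < δ := by positivity
      set s : Set M := paramc x '' Set.Icc 0 δ with hsdef
      have hsO : s ⊆ O := by
        rintro _ ⟨t, ht, rfl⟩
        apply hball
        have habs : |t| < δ₀ := by
          rw [abs_of_nonneg ht.1]; linarith [ht.2]
        simpa [Real.dist_eq] using habs
      have smeas : MeasurableSet s := ((isCompact_Icc.image (hpcont x)).isClosed).measurableSet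
      have hssub : s ⊆ leafc x := by
        rw [← hprange x]; exact Set.image_subset_range _ _
      have hlms : leafMeasC x s = ENNReal.ofReal δ := by
        rw [hlm x, Measure.map_apply ((hpcont x).measurable) smeas,
          Set.preimage_image_eq _ (hpinj x), Real.volume_Icc, sub_zero]
      have fsmeas : MeasurableSet (f '' s) := by
        rw [Set.image_eq_preimage_of_inverse hli hri]
        exact hfic.measurable smeas
      have hBA : volc (f x) (f '' s) = volc x s := by
        rw [← hpres x, Measure.map_apply hfc.measurable fsmeas, Set.preimage_image_eq _ hfinj]
      have hAform : volc x s = ∫⁻ y in s, ENNReal.ofReal (φ y) ∂(leafMeasC x) := by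
        rw [hφdens x, withDensity_apply _ smeas]
      have hBform : volc (f x) (f '' s)
          = ∫⁻ y in f '' s, ENNReal.ofReal (φ y) ∂(leafMeasC (f x)) := by
        rw [hφdens (f x), withDensity_apply _ fsmeas]
      have hLform : leafMeasC (f x) (f '' s)
          = ∫⁻ y in s, ENNReal.ofReal (jacc y) ∂(leafMeasC x) := hjspec x s hssub smeas
      have hφmeas : Measurable fun y => ENNReal.ofReal (φ y) :=
        ENNReal.measurable_ofReal.comp hφcont.measurable
      have hjmeas : Measurable fun y => ENNReal.ofReal (jacc y) :=
        ENNReal.measurable_ofReal.comp hjcont.measurable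
      have hAub : volc x s ≤ ENNReal.ofReal (φ x + ε) * ENNReal.ofReal δ := by
        rw [hAform, ← hlms]
        calc ∫⁻ y in s, ENNReal.ofReal (φ y) ∂(leafMeasC x)
            ≤ ∫⁻ _ in s, ENNReal.ofReal (φ x + ε) ∂(leafMeasC x) :=
              setLIntegral_mono measurable_const fun y hy =>
                ENNReal.ofReal_le_ofReal (le_of_lt (hsO hy).1.1.2)
          _ = ENNReal.ofReal (φ x + ε) * leafMeasC x s := setLIntegral_const _ _
      have hAlb : ENNReal.ofReal (φ x - ε) * ENNReal.ofReal δ ≤ volc x s := by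
        rw [hAform, ← hlms]
        calc ENNReal.ofReal (φ x - ε) * leafMeasC x s
            = ∫⁻ _ in s, ENNReal.ofReal (φ x - ε) ∂(leafMeasC x) := (setLIntegral_const _ _).symm
          _ ≤ ∫⁻ y in s, ENNReal.ofReal (φ y) ∂(leafMeasC x) :=
              setLIntegral_mono hφmeas fun y hy =>
                ENNReal.ofReal_le_ofReal (le_of_lt (hsO hy).1.1.1)
      have hLub : leafMeasC (f x) (f '' s) ≤ ENNReal.ofReal (jacc x + ε) * ENNReal.ofReal δ := by
        rw [hLform, ← hlms]
        calc ∫⁻ y in s, ENNReal.ofReal (jacc y) ∂(leafMeasC x)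
            ≤ ∫⁻ _ in s, ENNReal.ofReal (jacc x + ε) ∂(leafMeasC x) :=
              setLIntegral_mono measurable_const fun y hy =>
                ENNReal.ofReal_le_ofReal (le_of_lt (hsO hy).1.2.2)
          _ = ENNReal.ofReal (jacc x + ε) * leafMeasC x s := setLIntegral_const _ _
      have hLlb : ENNReal.ofReal (jacc x - ε) * ENNReal.ofReal δ ≤ leafMeasC (f x) (f '' s) := by
        rw [hLform, ← hlms]
        calc ENNReal.ofReal (jacc x - ε) * leafMeasC x s
            = ∫⁻ _ in s, ENNReal.ofReal (jacc x - ε) ∂(leafMeasC x) := (setLIntegral_const _ _).symm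
          _ ≤ ∫⁻ y in s, ENNReal.ofReal (jacc y) ∂(leafMeasC x) :=
              setLIntegral_mono hjmeas fun y hy =>
                ENNReal.ofReal_le_ofReal (le_of_lt (hsO hy).1.2.1)
      have hfsV : ∀ y ∈ f '' s, φ (f x) - ε < φ y ∧ φ y < φ (f x) + ε := by
        rintro _ ⟨z, hz, rfl⟩
        exact (hsO hz).2
      have hBub : volc (f x) (f '' s)
          ≤ ENNReal.ofReal (φ (f x) + ε) * leafMeasC (f x) (f '' s) := by
        rw [hBform]
        calc ∫⁻ y in f '' s, ENNReal.ofReal (φ y) ∂(leafMeasC (f x))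
            ≤ ∫⁻ _ in f '' s, ENNReal.ofReal (φ (f x) + ε) ∂(leafMeasC (f x)) :=
              setLIntegral_mono measurable_const fun y hy =>
                ENNReal.ofReal_le_ofReal (le_of_lt (hfsV y hy).2)
          _ = ENNReal.ofReal (φ (f x) + ε) * leafMeasC (f x) (f '' s) := setLIntegral_const _ _
      have hBlb : ENNReal.ofReal (φ (f x) - ε) * leafMeasC (f x) (f '' s)
          ≤ volc (f x) (f '' s) := by
        rw [hBform]
        calc ENNReal.ofReal (φ (f x) - ε) * leafMeasC (f x) (f '' s)
            = ∫⁻ _ in f '' s, ENNReal.ofReal (φ (f x) - ε) ∂(leafMeasC (f x)) :=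
              (setLIntegral_const _ _).symm
          _ ≤ ∫⁻ y in f '' s, ENNReal.ofReal (φ y) ∂(leafMeasC (f x)) :=
              setLIntegral_mono hφmeas fun y hy =>
                ENNReal.ofReal_le_ofReal (le_of_lt (hfsV y hy).1)
      constructor
      · rcases le_or_gt (φ x - ε) 0 with hsign | hsign
        · have hnn : 0 ≤ (φ (f x) + ε) * (jacc x + ε) :=
            mul_nonneg (by linarith [hφpos (f x)]) (by linarith [hjpos x])
          linarith
        · have chain : ENNReal.ofReal ((φ x - ε) * δ)
              ≤ ENNReal.ofReal ((φ (f x) + ε) * ((jacc x + ε) * δ)) := by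
            rw [ENNReal.ofReal_mul hsign.le,
              ENNReal.ofReal_mul (by linarith [hφpos (f x)] : (0:ℝ) ≤ φ (f x) + ε),
              ENNReal.ofReal_mul (by linarith [hjpos x] : (0:ℝ) ≤ jacc x + ε)]
            calc ENNReal.ofReal (φ x - ε) * ENNReal.ofReal δ
                ≤ volc x s := hAlb
              _ = volc (f x) (f '' s) := hBA.symm
              _ ≤ ENNReal.ofReal (φ (f x) + ε) * leafMeasC (f x) (f '' s) := hBub
              _ ≤ ENNReal.ofReal (φ (f x) + ε) * (ENNReal.ofReal (jacc x + ε) * ENNReal.ofReal δ) :=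
                  mul_le_mul_right hLub _
          have hreal : (φ x - ε) * δ ≤ (φ (f x) + ε) * ((jacc x + ε) * δ) :=
            (ENNReal.ofReal_le_ofReal_iff
              (mul_nonneg (by linarith [hφpos (f x)])
                (mul_nonneg (by linarith [hjpos x]) hδ.le))).mp chain
          nlinarith [hreal, hδ]
      · have chain : ENNReal.ofReal ((φ (f x) - ε) * ((jacc x - ε) * δ))
            ≤ ENNReal.ofReal ((φ x + ε) * δ) := by
          rw [ENNReal.ofReal_mul (by linarith : (0:ℝ) ≤ φ (f x) - ε),
            ENNReal.ofReal_mul (by linarith : (0:ℝ) ≤ jacc x - ε),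
            ENNReal.ofReal_mul (by linarith [hφpos x] : (0:ℝ) ≤ φ x + ε)]
          calc ENNReal.ofReal (φ (f x) - ε) * (ENNReal.ofReal (jacc x - ε) * ENNReal.ofReal δ)
              ≤ ENNReal.ofReal (φ (f x) - ε) * leafMeasC (f x) (f '' s) :=
                mul_le_mul_right hLlb _
            _ ≤ volc (f x) (f '' s) := hBlb
            _ = volc x s := hBA
            _ ≤ ENNReal.ofReal (φ x + ε) * ENNReal.ofReal δ := hAub
        have hreal : (φ (f x) - ε) * ((jacc x - ε) * δ) ≤ (φ x + ε) * δ :=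
          (ENNReal.ofReal_le_ofReal_iff
            (mul_nonneg (by linarith [hφpos x]) hδ.le)).mp chain
        nlinarith [hreal, hδ]
    have h1 : φ x ≤ φ (f x) * jacc x := by
      by_contra hcon
      push_neg at hcon
      have hc0 : 0 < φ x - φ (f x) * jacc x := by linarith
      have hD0 : (0:ℝ) < φ (f x) + jacc x + 3 := by
        have := hφpos (f x); have := hjpos x; linarith
      set ε : ℝ := min (min (φ (f x) / 2) (jacc x / 2))
        (min 1 ((φ x - φ (f x) * jacc x) / (φ (f x) + jacc x + 3))) with hεdef
      have hε0 : 0 < ε :=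
        lt_min (lt_min (by linarith [hφpos (f x)]) (by linarith [hjpos x]))
          (lt_min one_pos (by positivity))
      have hε1 : ε < φ (f x) := by
        have h : ε ≤ φ (f x) / 2 :=
          le_trans (min_le_left (min (φ (f x) / 2) (jacc x / 2)) _) (min_le_left _ _)
        have := hφpos (f x); linarith
      have hε2 : ε < jacc x := by
        have h : ε ≤ jacc x / 2 :=
          le_trans (min_le_left (min (φ (f x) / 2) (jacc x / 2)) _) (min_le_right _ _)
        have := hjpos x; linarith
      have hεle1 : ε ≤ 1 := (min_le_right _ _).trans (min_le_left _ _)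
      have hεleD : ε * (φ (f x) + jacc x + 3) ≤ φ x - φ (f x) * jacc x := by
        have h : ε ≤ (φ x - φ (f x) * jacc x) / (φ (f x) + jacc x + 3) :=
          (min_le_right _ _).trans (min_le_right _ _)
        exact (le_div_iff₀ hD0).mp h
      obtain ⟨hm1, _⟩ := main ε hε0 hε1 hε2
      nlinarith [hm1, hε0, hεleD, mul_le_of_le_one_right hε0.le hεle1,
        hφpos (f x), hjpos x]
    have h2 : φ (f x) * jacc x ≤ φ x := by
      by_contra hcon
      push_neg at hcon
      have hc0 : 0 < φ (f x) * jacc x - φ x := by linarith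
      have hD0 : (0:ℝ) < φ (f x) + jacc x + 3 := by
        have := hφpos (f x); have := hjpos x; linarith
      set ε : ℝ := min (min (φ (f x) / 2) (jacc x / 2))
        (min 1 ((φ (f x) * jacc x - φ x) / (φ (f x) + jacc x + 3))) with hεdef
      have hε0 : 0 < ε :=
        lt_min (lt_min (by linarith [hφpos (f x)]) (by linarith [hjpos x]))
          (lt_min one_pos (by positivity))
      have hε1 : ε < φ (f x) := by
        have h : ε ≤ φ (f x) / 2 :=
          le_trans (min_le_left (min (φ (f x) / 2) (jacc x / 2)) _) (min_le_left _ _)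
        have := hφpos (f x); linarith
      have hε2 : ε < jacc x := by
        have h : ε ≤ jacc x / 2 :=
          le_trans (min_le_left (min (φ (f x) / 2) (jacc x / 2)) _) (min_le_right _ _)
        have := hjpos x; linarith
      have hεle1 : ε ≤ 1 := (min_le_right _ _).trans (min_le_left _ _)
      have hεleD : ε * (φ (f x) + jacc x + 3) ≤ φ (f x) * jacc x - φ x := by
        have h : ε ≤ (φ (f x) * jacc x - φ x) / (φ (f x) + jacc x + 3) :=
          (min_le_right _ _).trans (min_le_right _ _)
        exact (le_div_iff₀ hD0).mp h
      obtain ⟨_, hm2⟩ := main ε hε0 hε1 hε2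
      nlinarith [hm2, hε0, hεleD, mul_le_of_le_one_right hε0.le hεle1,
        hφpos (f x), hjpos x]
    linarith
  -- The Jacobian product telescopes.
  have tele : ∀ p : M, ∀ n : ℕ,
      (∏ i ∈ Finset.range n, jacc (f^[i] p)) * φ (f^[n] p) = φ p := by
    intro p n
    induction n with
    | zero => simp
    | succ n ih =>
      rw [Finset.prod_range_succ, Function.iterate_succ_apply']
      linear_combination ih + (∏ i ∈ Finset.range n, jacc (f^[i] p)) * key (f^[n] p)
  intro p n _
  have hPpos : 0 < ∏ i ∈ Finset.range n, jacc (f^[i] p) :=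
    Finset.prod_pos fun i _ => hjpos _
  have h := tele p n
  have hq := hφbound (f^[n] p)
  have hp' := hφbound p
  have hq1 : 1 < φ (f^[n] p) * K₁ := by
    have := (div_lt_iff₀ hK₁pos).mp hq.1; linarith
  have hp1 : 1 < φ p * K₁ := by
    have := (div_lt_iff₀ hK₁pos).mp hp'.1; linarith
  constructor
  · rw [div_le_iff₀ (by positivity : (0:ℝ) < K₁ ^ 2)]
    nlinarith [h, hPpos, hK₁pos, hq.2, hp1, hφpos (f^[n] p), hφpos p,
      mul_pos hPpos hK₁pos]
  · nlinarith [h, hPpos, hK₁pos, hp'.2, hq1, hφpos (f^[n] p), hφpos p,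
      mul_pos hPpos hK₁pos]


end PaperDyn
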